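/- For 0 < x < y < 1, we have (g(x) - g(y))/(x - y) + g(x) + g(y) < 0, where g(x) = ((2x-1)/x²)·log(1-x). -/

import Mathlib

noncomputable def gfun (x : ℝ) : ℝ := ((2*x - 1) / x^2) * Real.log (1 - x)

noncomputable def g1 (x : ℝ) : ℝ :=
    2*(1-x)/x^3 * Real.log (1-x) - (2*x-1)/(x^2*(1-x))

noncomputable def g2 (x : ℝ) : ℝ :=
    (4*x-6)*Real.log (1-x)/x^4 - 2/x^3 - (4*x^2-5*x+2)/(x^3*(1-x)^2)

lemma gfun_hasDeriv {x : ℝ} (hx : 0 < x) (hx1 : x < 1) : HasDerivAt gfun (g1 x) x := by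
  have hx0 : x ≠ 0 := ne_of_gt hx
  have h1x : (0:ℝ) < 1 - x := by linarith
  have h1x0 : (1:ℝ) - x ≠ 0 := ne_of_gt h1x
  have hu : HasDerivAt (fun t : ℝ => (2*t-1)/t^2)
      ((2*x^2 - (2*x-1)*(2*x))/(x^2)^2) x := by
    have h1 : HasDerivAt (fun t : ℝ => 2*t-1) 2 x := by
      simpa using ((hasDerivAt_id x).const_mul 2).sub_const 1
    have h2 : HasDerivAt (fun t : ℝ => t^2) (2*x) x := by
      simpa using hasDerivAt_pow 2 x
    exact h1.div h2 (pow_ne_zero 2 hx0)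
  have hv : HasDerivAt (fun t : ℝ => Real.log (1-t)) (-1/(1-x)) x := by
    have h3 : HasDerivAt (fun t : ℝ => 1-t) (-1) x := by
      simpa using (hasDerivAt_id x).const_sub 1
    simpa using h3.log h1x0
  have := hu.mul hv
  convert this using 1
  iterate 3 rfl
  unfold g1
  field_simp
  ring

lemma g1_hasDeriv {x : ℝ} (hx : 0 < x) (hx1 : x < 1) : HasDerivAt g1 (g2 x) x := by
  have hx0 : x ≠ 0 := ne_of_gt hx
  have h1x : (0:ℝ) < 1 - x := by linarith
  have h1x0 : (1:ℝ) - x ≠ 0 := ne_of_gt h1x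
  have hv : HasDerivAt (fun t : ℝ => Real.log (1-t)) (-1/(1-x)) x := by
    have h3 : HasDerivAt (fun t : ℝ => 1-t) (-1) x := by
      simpa using (hasDerivAt_id x).const_sub 1
    simpa using h3.log h1x0
  have hu : HasDerivAt (fun t : ℝ => 2*(1-t)/t^3)
      (((-2)*x^3 - 2*(1-x)*(3*x^2))/(x^3)^2) x := by
    have h1 : HasDerivAt (fun t : ℝ => 2*(1-t)) (-2) x := by
      have : HasDerivAt (fun t : ℝ => 1-t) (-1) x := by
        simpa using (hasDerivAt_id x).const_sub 1
      simpa using this.const_mul 2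
    have h2 : HasDerivAt (fun t : ℝ => t^3) (3*x^2) x := by
      simpa using hasDerivAt_pow 3 x
    exact h1.div h2 (pow_ne_zero 3 hx0)
  have hA := hu.mul hv
  have hB : HasDerivAt (fun t : ℝ => (2*t-1)/(t^2*(1-t)))
      ((2*(x^2*(1-x)) - (2*x-1)*(2*x*(1-x) + x^2*(-1)))/(x^2*(1-x))^2) x := by
    have h1 : HasDerivAt (fun t : ℝ => 2*t-1) 2 x := by
      simpa using ((hasDerivAt_id x).const_mul 2).sub_const 1
    have h2 : HasDerivAt (fun t : ℝ => t^2*(1-t)) (2*x*(1-x) + x^2*(-1)) x := by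
      have ha : HasDerivAt (fun t : ℝ => t^2) (2*x) x := by
        simpa using hasDerivAt_pow 2 x
      have hb : HasDerivAt (fun t : ℝ => 1-t) (-1) x := by
        simpa using (hasDerivAt_id x).const_sub 1
      exact ha.mul hb
    exact h1.div h2 (by positivity)
  have := hA.sub hB
  convert this using 1
  iterate 3 rfl
  unfold g2
  field_simp
  ring

lemma g1_neg {x : ℝ} (hx : 0 < x) (hx1 : x < 1) : g1 x < 0 := by
  have h1x : (0:ℝ) < 1 - x := by linarith
  have hL : Real.log (1-x) < -x := by
    have := Real.log_lt_sub_one_of_pos h1x (by intro h; linarith [h] )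
    linarith
  have hnum : 2*(1-x)^2*Real.log (1-x) - x*(2*x-1) < 0 := by
    nlinarith [sq_nonneg (1-x), sq_nonneg x, mul_pos hx h1x]
  have hden : (0:ℝ) < x^3*(1-x) := by positivity
  have heq : g1 x = (2*(1-x)^2*Real.log (1-x) - x*(2*x-1))/(x^3*(1-x)) := by
    unfold g1
    field_simp
  rw [heq]
  exact div_neg_of_neg_of_pos hnum hden

lemma g2_nonneg {x : ℝ} (hx : 0 < x) (hx1 : x ≤ 1/2) : 0 ≤ g2 x := by
  have h1x : (0:ℝ) < 1 - x := by linarith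
  have hL : Real.log (1-x) ≤ -x := by
    have := Real.log_le_sub_one_of_pos h1x
    linarith
  have hnum : 0 ≤ (4*x-6)*Real.log (1-x)*(1-x)^2 - 2*x*(1-x)^2 - x*(4*x^2-5*x+2) := by
    have h1 : (6-4*x)*x ≤ (4*x-6)*Real.log (1-x) := by nlinarith
    nlinarith [sq_nonneg (1-x), mul_pos hx h1x, sq_nonneg x,
      mul_nonneg (mul_nonneg hx.le (by linarith : (0:ℝ) ≤ 1-2*x)) (by nlinarith : (0:ℝ) ≤ 2*x^2-3*x+2)]
  have hden : (0:ℝ) < x^4*(1-x)^2 := by positivity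
  have heq : g2 x = ((4*x-6)*Real.log (1-x)*(1-x)^2 - 2*x*(1-x)^2 - x*(4*x^2-5*x+2))/(x^4*(1-x)^2) := by
    unfold g2
    field_simp
  rw [heq]
  exact div_nonneg hnum hden.le

lemma gfun_strictAnti : StrictAntiOn gfun (Set.Ioo 0 1) := by
  apply strictAntiOn_of_deriv_neg (convex_Ioo 0 1)
  · intro t ht
    exact ((gfun_hasDeriv ht.1 ht.2).continuousAt).continuousWithinAt
  · intro t ht
    rw [interior_Ioo] at ht
    rw [(gfun_hasDeriv ht.1 ht.2).deriv]
    exact g1_neg ht.1 ht.2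

lemma gfun_convex {c : ℝ} (hc : 0 < c) (hc2 : c < 1/2) :
    ConvexOn ℝ (Set.Icc c (1/2)) gfun := by
  have hsub : Set.Icc c (1/2:ℝ) ⊆ Set.Ioo (0:ℝ) 1 := by
    intro t ht
    exact ⟨lt_of_lt_of_le hc ht.1, lt_of_le_of_lt ht.2 (by norm_num)⟩
  apply convexOn_of_hasDerivWithinAt2_nonneg (f' := g1) (f'' := g2) (convex_Icc _ _)
  · intro t ht
    exact ((gfun_hasDeriv (hsub ht).1 (hsub ht).2).continuousAt).continuousWithinAt
  · intro t ht
    rw [interior_Icc] at ht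
    exact (gfun_hasDeriv (by linarith [ht.1]) (by linarith [ht.2])).hasDerivWithinAt
  · intro t ht
    rw [interior_Icc] at ht
    exact (g1_hasDeriv (by linarith [ht.1]) (by linarith [ht.2])).hasDerivWithinAt
  · intro t ht
    rw [interior_Icc] at ht
    exact g2_nonneg (by linarith [ht.1]) (by linarith [ht.2])

theorem stmt13 (x y : ℝ) (hx : 0 < x) (hxy : x < y) (hy : y < 1) :
    (gfun x - gfun y) / (x - y) + gfun x + gfun y < 0 := by
  have hy0 : 0 < y := lt_trans hx hxy
  have hx1 : x < 1 := lt_trans hxy hy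
  set a := gfun x with ha
  set b := gfun y with hb
  have hab : b < a := gfun_strictAnti ⟨hx, hx1⟩ ⟨hy0, hy⟩ hxy
  have hlam : 0 < y - x := by linarith
  have hlam1 : y - x < 1 := by linarith
  -- reduce to (y-x)*(a+b) < a - b
  have key : (y - x) * (a + b) < a - b := by
    rcases le_or_gt b 0 with hbneg | hbpos
    · -- easy case
      nlinarith [mul_pos hlam (sub_pos.mpr hab)]
    · -- b > 0 : then y < 1/2
      have hy2 : y < 1/2 := by
        by_contra h
        push_neg at h
        have hlog : Real.log (1 - y) < 0 := by
          apply Real.log_neg <;> linarith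
        have : b ≤ 0 := by
          rw [hb]
          unfold gfun
          apply mul_nonpos_of_nonneg_of_nonpos
          · apply div_nonneg (by linarith) (by positivity)
          · linarith
        linarith
      have hx2 : x < 1/2 := lt_trans hxy hy2
      have hconv := gfun_convex hx hx2
      -- y = t*x + (1-t)*(1/2), t = (1/2-y)/(1/2-x)
      have hcx : (0:ℝ) < 1/2 - x := by linarith
      set t : ℝ := (1/2 - y)/(1/2 - x) with htdef
      have hne : (1/2 - x : ℝ) ≠ 0 := ne_of_gt hcx
      have ht0 : 0 ≤ t := div_nonneg (by linarith) hcx.le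
      have ht1 : t < 1 := by
        rw [htdef, div_lt_one hcx]
        linarith
      have hg12 : gfun (1/2) = 0 := by
        unfold gfun
        norm_num
      have hmem1 : x ∈ Set.Icc x (1/2:ℝ) := ⟨le_refl _, by linarith⟩
      have hmem2 : (1/2:ℝ) ∈ Set.Icc x (1/2:ℝ) := ⟨by linarith, le_refl _⟩
      have htc : t * (1/2 - x) = 1/2 - y := by
        rw [htdef]; exact div_mul_cancel₀ _ hne
      have hcomb := hconv.2 hmem1 hmem2 ht0 (by linarith : (0:ℝ) ≤ 1 - t) (by ring)
      have hyeq : t • x + (1 - t) • (1/2:ℝ) = y := by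
        rw [smul_eq_mul, smul_eq_mul]
        linear_combination -htc
      rw [hyeq, hg12, smul_eq_mul, smul_eq_mul, mul_zero, add_zero, ← hb, ← ha] at hcomb
      -- hcomb : b ≤ t * a
      have ha0 : 0 < a := lt_trans hbpos hab
      nlinarith [mul_pos hlam ha0, mul_pos hcx ha0]
  have hxy0 : x - y < 0 := by linarith
  rw [div_add' _ _ _ (ne_of_lt hxy0), div_add' _ _ _ (ne_of_lt hxy0), div_neg_iff]
  left
  constructor
  · nlinarith
  · exact hxy0
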